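/- Let $n \geq 1$ and $\delta > 0$. Consider the dyadic family of cubes: for each integer $k \geq 0$, cubes of the form $z + (0, \delta 2^{-k})^n$ with $z \in \delta 2^{-k} \mathbb{Z}^n$. Suppose $q_1$ and $q_2$ are two such cubes (possibly of different generations $k_1, k_2$ with $|k_1 - k_2| \leq 1$), and let $q_i''$ denote the cube with the same center as $q_i$ dilated by the factor $4/3$. If $q_1'' \cap q_2'' \neq \emptyset$, then $|q_1'' \cap q_2''| \geq 4^{-n} \max\{|q_1|, |q_2|\}$. -/

import Mathlib

open MeasureTheory

/-- The enlarged cube (factor `4/3`) of the dyadic cube `z + (0, ℓ)^n`: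
the open cube with the same center `z + (ℓ/2, …, ℓ/2)` and side `(4/3)ℓ`. -/
def enlargedCube (n : ℕ) (z : Fin n → ℝ) (ℓ : ℝ) : Set (Fin n → ℝ) :=
  {x | ∀ i, |x i - (z i + ℓ / 2)| < (2 / 3) * ℓ}

lemma int_abs_le_of_lt (t : ℤ) (K : ℕ) (h : |(t:ℝ)| < K + 1) : |(t:ℝ)| ≤ K := by
  have h' : |t| < (K:ℤ) + 1 := by exact_mod_cast h
  have h'' : |t| ≤ (K:ℤ) := by omega
  exact_mod_cast h''

/-- equal-generation case: centers differ by a multiple of `ℓ`. -/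
lemma quant_eq (ℓ u v : ℝ) (hℓ : 0 < ℓ) (t : ℤ) (ht : u - v = t * ℓ)
    (h : |u - v| < 4/3 * ℓ) : |u - v| ≤ ℓ := by
  rw [ht, abs_mul, abs_of_pos hℓ] at h ⊢
  have h4 : |(t:ℝ)| < (1:ℕ) + 1 := by
    push_cast
    nlinarith [abs_nonneg (t:ℝ)]
  have := int_abs_le_of_lt t 1 h4
  push_cast at this
  nlinarith

/-- ratio-2 case: centers differ by a multiple of `ℓ/4`, where `ℓ` is the larger side. -/
lemma quant_half (ℓ u v : ℝ) (hℓ : 0 < ℓ) (t : ℤ) (ht : u - v = t * (ℓ/4))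
    (h : |u - v| < ℓ) : |u - v| ≤ 3/4 * ℓ := by
  rw [ht, abs_mul, abs_of_pos (by linarith : (0:ℝ) < ℓ/4)] at h ⊢
  have h4 : |(t:ℝ)| < (3:ℕ) + 1 := by
    push_cast
    nlinarith [abs_nonneg (t:ℝ)]
  have := int_abs_le_of_lt t 3 h4
  push_cast at this
  nlinarith

theorem stmt_15 (n : ℕ) (hn : 1 ≤ n) (δ : ℝ) (hδ : 0 < δ)
    (k₁ k₂ : ℕ) (hk : k₁ ≤ k₂ + 1 ∧ k₂ ≤ k₁ + 1)
    (z₁ z₂ : Fin n → ℝ)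
    (hz₁ : ∃ m : Fin n → ℤ, ∀ i, z₁ i = (m i : ℝ) * (δ / 2 ^ k₁))
    (hz₂ : ∃ m : Fin n → ℤ, ∀ i, z₂ i = (m i : ℝ) * (δ / 2 ^ k₂))
    (hne : (enlargedCube n z₁ (δ / 2 ^ k₁) ∩ enlargedCube n z₂ (δ / 2 ^ k₂)).Nonempty) :
    ENNReal.ofReal ((4:ℝ)⁻¹ ^ n * max ((δ / 2 ^ k₁) ^ n) ((δ / 2 ^ k₂) ^ n))
      ≤ volume (enlargedCube n z₁ (δ / 2 ^ k₁) ∩ enlargedCube n z₂ (δ / 2 ^ k₂)) := by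
  obtain ⟨m₁, hm₁⟩ := hz₁
  obtain ⟨m₂, hm₂⟩ := hz₂
  set ℓ₁ := δ / 2 ^ k₁ with hℓ₁def
  set ℓ₂ := δ / 2 ^ k₂ with hℓ₂def
  have hℓ₁ : 0 < ℓ₁ := div_pos hδ (by positivity)
  have hℓ₂ : 0 < ℓ₂ := div_pos hδ (by positivity)
  set c : Fin n → ℝ := fun i => z₁ i + ℓ₁ / 2 with hc
  set d : Fin n → ℝ := fun i => z₂ i + ℓ₂ / 2 with hd
  set r₁ : ℝ := 2 / 3 * ℓ₁ with hr₁
  set r₂ : ℝ := 2 / 3 * ℓ₂ with hr₂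
  set L : ℝ := max ℓ₁ ℓ₂ with hL
  have hLpos : 0 < L := lt_max_of_lt_left hℓ₁
  -- side ratio ≤ 2
  have hpow : ∀ a b : ℕ, a ≤ b + 1 → δ / 2 ^ b ≤ 2 * (δ / 2 ^ a) := by
    intro a b hab
    have hp : (2:ℝ) ^ a ≤ 2 ^ (b + 1) := by
      apply pow_le_pow_right₀ (by norm_num) hab
    rw [pow_succ] at hp
    rw [div_le_iff₀ (by positivity : (0:ℝ) < 2 ^ b)]
    have h2a : (0:ℝ) < 2 ^ a := by positivity
    have he : 2 * (δ / 2 ^ a) * 2 ^ b = δ * (2 ^ b * 2) / 2 ^ a := by ring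
    rw [he, le_div_iff₀ h2a]
    nlinarith
  have hratio₁ : ℓ₂ ≤ 2 * ℓ₁ := hpow k₁ k₂ hk.1
  have hratio₂ : ℓ₁ ≤ 2 * ℓ₂ := hpow k₂ k₁ hk.2
  -- rewrite the cubes as products of open intervals
  have hcube : ∀ (z : Fin n → ℝ) (ℓ : ℝ),
      enlargedCube n z ℓ = Set.pi Set.univ fun i =>
        Set.Ioo (z i + ℓ / 2 - 2 / 3 * ℓ) (z i + ℓ / 2 + 2 / 3 * ℓ) := by
    intro z ℓ
    ext x
    simp only [enlargedCube, Set.mem_setOf_eq, Set.mem_pi, Set.mem_univ, forall_true_left,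
      Set.mem_Ioo]
    refine forall_congr' fun i => ?_
    rw [abs_lt]
    constructor <;> rintro ⟨h1, h2⟩ <;> constructor <;> linarith
  -- nonemptiness gives proximity of centers
  obtain ⟨x, hx₁, hx₂⟩ := hne
  have hcd : ∀ i, |c i - d i| < r₁ + r₂ := by
    intro i
    have h1 : |x i - c i| < r₁ := hx₁ i
    have h2 : |x i - d i| < r₂ := hx₂ i
    calc |c i - d i| ≤ |c i - x i| + |x i - d i| := abs_sub_le _ _ _
      _ = |x i - c i| + |x i - d i| := by rw [abs_sub_comm]
      _ < r₁ + r₂ := by linarith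
  -- the key quantization bound
  have habs : ∀ i, |c i - d i| ≤ r₁ + r₂ - L / 4 := by
    intro i
    have hcase : k₂ = k₁ ∨ k₂ = k₁ + 1 ∨ k₁ = k₂ + 1 := by omega
    rcases hcase with h | h | h
    · -- equal sides
      have heq : ℓ₂ = ℓ₁ := by rw [hℓ₁def, hℓ₂def, h]
      have ht : c i - d i = ((m₁ i - m₂ i : ℤ) : ℝ) * ℓ₁ := by
        simp only [hc, hd, hm₁ i, hm₂ i, heq]
        push_cast
        ring
      have hlt : |c i - d i| < 4/3 * ℓ₁ := by
        have := hcd i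
        rw [hr₁, hr₂, heq] at this
        linarith
      have := quant_eq ℓ₁ (c i) (d i) hℓ₁ _ ht hlt
      have hLeq : L = ℓ₁ := by rw [hL, heq, max_self]
      rw [hLeq, hr₁, hr₂, heq]
      linarith
    · -- ℓ₂ = ℓ₁ / 2
      have heq : ℓ₂ = ℓ₁ / 2 := by
        rw [hℓ₁def, hℓ₂def, h, pow_succ]
        ring
      have ht : c i - d i = ((4 * m₁ i - 2 * m₂ i + 1 : ℤ) : ℝ) * (ℓ₁ / 4) := by
        simp only [hc, hd, hm₁ i, hm₂ i, heq]
        push_cast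
        ring
      have hlt : |c i - d i| < ℓ₁ := by
        have := hcd i
        rw [hr₁, hr₂, heq] at this
        linarith
      have := quant_half ℓ₁ (c i) (d i) hℓ₁ _ ht hlt
      have hLeq : L = ℓ₁ := by
        rw [hL, max_eq_left]
        rw [heq]; linarith
      rw [hLeq, hr₁, hr₂, heq]
      linarith
    · -- ℓ₁ = ℓ₂ / 2
      have heq : ℓ₁ = ℓ₂ / 2 := by
        rw [hℓ₁def, hℓ₂def, h, pow_succ]
        ring
      have ht : c i - d i = ((2 * m₁ i - 4 * m₂ i - 1 : ℤ) : ℝ) * (ℓ₂ / 4) := by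
        simp only [hc, hd, hm₁ i, hm₂ i, heq]
        push_cast
        ring
      have hlt : |c i - d i| < ℓ₂ := by
        have := hcd i
        rw [hr₁, hr₂, heq] at this
        linarith
      have := quant_half ℓ₂ (c i) (d i) hℓ₂ _ ht hlt
      have hLeq : L = ℓ₂ := by
        rw [hL, max_eq_right]
        rw [heq]; linarith
      rw [hLeq, hr₁, hr₂, heq]
      linarith
  -- per-coordinate length bound
  have hlen : ∀ i, L / 4 ≤
      min (c i + r₁) (d i + r₂) - max (c i - r₁) (d i - r₂) := by
    intro i
    obtain ⟨ha, hb⟩ := abs_le.mp (habs i)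
    have h2r₁ : L / 4 ≤ 2 * r₁ := by rw [hL, hr₁]; rcases max_cases ℓ₁ ℓ₂ with ⟨h,_⟩|⟨h,_⟩ <;> rw [h] <;> linarith
    have h2r₂ : L / 4 ≤ 2 * r₂ := by rw [hL, hr₂]; rcases max_cases ℓ₁ ℓ₂ with ⟨h,_⟩|⟨h,_⟩ <;> rw [h] <;> linarith
    rcases le_total (c i - r₁) (d i - r₂) with h1 | h1 <;>
      rcases le_total (c i + r₁) (d i + r₂) with h2 | h2 <;>
        simp only [max_eq_left h1, max_eq_right h1, min_eq_left h2, min_eq_right h2] <;>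
        linarith
  -- compute the volume
  rw [hcube z₁ ℓ₁, hcube z₂ ℓ₂, ← Set.pi_inter_distrib]
  have hIoo : ∀ i, Set.Ioo (z₁ i + ℓ₁ / 2 - 2 / 3 * ℓ₁) (z₁ i + ℓ₁ / 2 + 2 / 3 * ℓ₁)
      ∩ Set.Ioo (z₂ i + ℓ₂ / 2 - 2 / 3 * ℓ₂) (z₂ i + ℓ₂ / 2 + 2 / 3 * ℓ₂)
      = Set.Ioo (max (c i - r₁) (d i - r₂)) (min (c i + r₁) (d i + r₂)) := by
    intro i
    rw [Set.Ioo_inter_Ioo]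
  simp only [hIoo]
  rw [volume_pi_pi]
  simp only [Real.volume_Ioo]
  -- reduce to a product comparison
  have hmaxpow : (4:ℝ)⁻¹ ^ n * max (ℓ₁ ^ n) (ℓ₂ ^ n) = (L / 4) ^ n := by
    have : max (ℓ₁ ^ n) (ℓ₂ ^ n) = L ^ n := by
      rcases le_total ℓ₁ ℓ₂ with h | h
      · rw [hL, max_eq_right h, max_eq_right (pow_le_pow_left₀ hℓ₁.le h n)]
      · rw [hL, max_eq_left h, max_eq_left (pow_le_pow_left₀ hℓ₂.le h n)]
    rw [this, div_pow]
    rw [inv_pow, div_eq_mul_inv, mul_comm]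
  rw [hmaxpow, ENNReal.ofReal_pow (by positivity)]
  calc ENNReal.ofReal (L / 4) ^ n
      = ∏ _i : Fin n, ENNReal.ofReal (L / 4) := by
        rw [Finset.prod_const, Finset.card_univ, Fintype.card_fin]
    _ ≤ ∏ i : Fin n, ENNReal.ofReal
          (min (c i + r₁) (d i + r₂) - max (c i - r₁) (d i - r₂)) := by
        apply Finset.prod_le_prod'
        intro i _
        exact ENNReal.ofReal_le_ofReal (hlen i)
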